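/- Let f : Ḡ×I'×I → ℝ be continuous and continuously differentiable with respect to its second (primed) variable E', with ∂f/∂E' continuous on Ḡ×I'×I. Then for every x ∈ Ḡ and E ∈ [E₀,E_m) the Hadamard finite part integral exists and p.f.∫_E^{E_m} f(x,E',E)/(E'−E) dE' = − ∫_E^{E_m} log(E'−E)·(∂f/∂E')(x,E',E) dE' + log(E_m−E)·f(x,E_m,E). -/

import Mathlib

open MeasureTheory Filter Set
open scoped Topology

noncomputable section

abbrev E3 : Type := EuclideanSpace ℝ (Fin 3)

/-- Hadamard finite part of order 1 with upper limit `b`. -/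
def HasPF1Upper (g : ℝ → ℝ) (x b L : ℝ) : Prop :=
  Tendsto (fun ε : ℝ => (∫ t in (x + ε)..b, g t / (t - x)) + g x * Real.log ε)
    (𝓝[>] (0 : ℝ)) (𝓝 L)

lemma intervalIntegrable_log_zero {c : ℝ} (hc : 0 < c) :
    IntervalIntegrable Real.log volume 0 c := by
  set m := min c 1 with hm
  have hm0 : 0 < m := lt_min hc one_pos
  have h1 : IntegrableOn (fun t => -Real.log t) (Ioc 0 m) := by
    apply intervalIntegral.integrableOn_deriv_of_nonneg (g := fun t => t - t * Real.log t)
    · exact (continuous_id.sub Real.continuous_mul_log).continuousOn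
    · intro y hy
      have h : HasDerivAt (fun t => t - t * Real.log t) (1 - (Real.log y + 1)) y :=
        (hasDerivAt_id y).sub (Real.hasDerivAt_mul_log (ne_of_gt hy.1))
      convert h using 1; ring
    · intro y hy
      rw [neg_nonneg]
      exact Real.log_nonpos hy.1.le (hy.2.le.trans (min_le_right _ _))
  have h1' : IntegrableOn Real.log (Ioc 0 m) := by
    have h := h1.neg
    rw [show (-fun t => -Real.log t) = Real.log by funext t; simp] at h
    exact h
  have h2 : IntegrableOn Real.log (Ioc m c) := by
    apply (ContinuousOn.integrableOn_Icc ?_).mono_set Ioc_subset_Icc_self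
    exact Real.continuousOn_log.mono fun y hy => by
      simp only [mem_compl_iff, mem_singleton_iff]
      exact ne_of_gt (lt_of_lt_of_le hm0 hy.1)
  have h3 : IntegrableOn Real.log (Ioc 0 c) := by
    have := h1'.union h2
    rwa [Ioc_union_Ioc_eq_Ioc hm0.le (min_le_left c 1)] at this
  rwa [intervalIntegrable_iff_integrableOn_Ioc_of_le hc.le]

/-- partial-integration formula for the first-order Hadamard finite part:
if `f : Ḡ×I'×I → ℝ` is continuous with continuous partial derivative `f' = ∂f/∂E'`,
then for `x ∈ Ḡ`, `E ∈ [E₀,E_m)`,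
`p.f.∫_E^{E_m} f(x,E',E)/(E'−E) dE'
  = −∫_E^{E_m} log(E'−E)·(∂f/∂E')(x,E',E) dE' + log(E_m−E)·f(x,E_m,E)`. -/
theorem stmt3 (G : Set E3) (hGopen : IsOpen G) (hGbdd : Bornology.IsBounded G)
    (E₀ Em : ℝ) (hE₀ : 0 ≤ E₀) (hI : E₀ < Em)
    (f f' : E3 → ℝ → ℝ → ℝ)
    (hf : ContinuousOn (fun p : E3 × ℝ × ℝ => f p.1 p.2.1 p.2.2)
      (closure G ×ˢ Set.Icc E₀ Em ×ˢ Set.Icc E₀ Em))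
    (hf' : ContinuousOn (fun p : E3 × ℝ × ℝ => f' p.1 p.2.1 p.2.2)
      (closure G ×ˢ Set.Icc E₀ Em ×ˢ Set.Icc E₀ Em))
    (hderiv : ∀ x ∈ closure G, ∀ E ∈ Set.Icc E₀ Em, ∀ E' ∈ Set.Icc E₀ Em,
      HasDerivWithinAt (fun s => f x s E) (f' x E' E) (Set.Icc E₀ Em) E') :
    ∀ x ∈ closure G, ∀ E ∈ Set.Ico E₀ Em,
      HasPF1Upper (fun E' => f x E' E) E Em
        ((- ∫ E' in E..Em, Real.log (E' - E) * f' x E' E) + Real.log (Em - E) * f x Em E) := by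
  intro x hx E hE
  obtain ⟨hE0, hEm⟩ := hE
  set g : ℝ → ℝ := fun t => f x t E with hgdef
  set g' : ℝ → ℝ := fun t => f' x t E with hg'def
  have hEI : E ∈ Icc E₀ Em := ⟨hE0, hEm.le⟩
  have hEmI : Em ∈ Icc E₀ Em := ⟨hI.le, le_rfl⟩
  have hmap : ∀ t ∈ Icc E₀ Em, ((x, t, E) : E3 × ℝ × ℝ) ∈
      closure G ×ˢ Set.Icc E₀ Em ×ˢ Set.Icc E₀ Em := fun t ht => ⟨hx, ht, hEI⟩
  have hcurve : ContinuousOn (fun t : ℝ => ((x, t, E) : E3 × ℝ × ℝ)) (Icc E₀ Em) :=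
    (continuous_const.prodMk (continuous_id.prodMk continuous_const)).continuousOn
  have hgc : ContinuousOn g (Icc E₀ Em) := hf.comp hcurve hmap
  have hg'c : ContinuousOn g' (Icc E₀ Em) := hf'.comp hcurve hmap
  have hd : ∀ t ∈ Icc E₀ Em, HasDerivWithinAt g (g' t) (Icc E₀ Em) t :=
    fun t ht => hderiv x hx E hEI t ht
  obtain ⟨M, hM⟩ : ∃ M, ∀ t ∈ Icc E₀ Em, ‖g' t‖ ≤ M :=
    isCompact_Icc.exists_bound_of_continuousOn hg'c
  set φ : ℝ → ℝ := fun t => Real.log (t - E) * g' t with hφdef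
  have hsubI : Icc E Em ⊆ Icc E₀ Em := Icc_subset_Icc hE0 le_rfl
  have huIcc : uIcc E Em = Icc E Em := uIcc_of_le hEm.le
  have hφint : IntervalIntegrable φ volume E Em := by
    have hlog : IntervalIntegrable (fun t => Real.log (t - E)) volume E Em := by
      have h := (intervalIntegrable_log_zero (sub_pos.2 hEm)).comp_sub_right E
      simpa using h
    exact hlog.mul_continuousOn (by rw [huIcc]; exact hg'c.mono hsubI)
  -- the key integration-by-parts identity
  have key : ∀ ε ∈ Ioo (0:ℝ) (Em - E),
      (∫ t in (E + ε)..Em, g t / (t - E)) + g E * Real.log ε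
        = Real.log (Em - E) * g Em - (∫ t in (E + ε)..Em, φ t)
          + (g E - g (E + ε)) * Real.log ε := by
    intro ε hε
    set a := E + ε with hadef
    have haE : E < a := by simp [hadef, hε.1]
    have haEm : a ≤ Em := by have := hε.2; simp [hadef]; linarith
    have hsub : Icc a Em ⊆ Icc E₀ Em := Icc_subset_Icc (le_trans hE0 haE.le) le_rfl
    have hne : ∀ t ∈ Icc a Em, t - E ≠ 0 := fun t ht => by
      have : E < t := lt_of_lt_of_le haE ht.1; exact ne_of_gt (by linarith)
    have hlogc : ContinuousOn (fun t => Real.log (t - E)) (Icc a Em) := by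
      apply Real.continuousOn_log.comp (continuous_id.sub continuous_const).continuousOn
      intro t ht
      simp only [mem_compl_iff, mem_singleton_iff, id]
      exact hne t ht
    have hinvc : ContinuousOn (fun t => (t - E)⁻¹) (Icc a Em) :=
      ((continuous_id.sub continuous_const).continuousOn).inv₀ hne
    have hcont_h : ContinuousOn (fun t => g t * Real.log (t - E)) (Icc a Em) :=
      (hgc.mono hsub).mul hlogc
    have hderiv_h : ∀ t ∈ Ioo a Em,
        HasDerivWithinAt (fun t => g t * Real.log (t - E))
          (g' t * Real.log (t - E) + g t * (t - E)⁻¹) (Ioi t) t := by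
      intro t ht
      have htI : t ∈ Ioo E₀ Em := ⟨lt_of_le_of_lt (le_trans hE0 haE.le) ht.1, ht.2⟩
      have hgt : HasDerivAt g (g' t) t :=
        (hd t (Ioo_subset_Icc_self htI)).hasDerivAt (Icc_mem_nhds htI.1 htI.2)
      have hlt : HasDerivAt (fun t => Real.log (t - E)) (t - E)⁻¹ t := by
        have h1 : HasDerivAt (fun s : ℝ => s - E) 1 t := (hasDerivAt_id t).sub_const E
        have h2 := (Real.hasDerivAt_log (by
          have : E < t := lt_of_lt_of_le haE ht.1.le; exact ne_of_gt (by linarith))).comp t h1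
        rw [mul_one] at h2; exact h2
      exact (hgt.mul hlt).hasDerivWithinAt
    have hint1 : IntervalIntegrable (fun t => g' t * Real.log (t - E)) volume a Em :=
      ((hg'c.mono hsub).mul hlogc).intervalIntegrable_of_Icc haEm
    have hint2 : IntervalIntegrable (fun t => g t * (t - E)⁻¹) volume a Em :=
      ((hgc.mono hsub).mul hinvc).intervalIntegrable_of_Icc haEm
    have hftc := intervalIntegral.integral_eq_sub_of_hasDeriv_right_of_le haEm hcont_h
      hderiv_h (hint1.add hint2)
    rw [intervalIntegral.integral_add hint1 hint2] at hftc
    have hφeq : (∫ t in a..Em, φ t) = ∫ t in a..Em, g' t * Real.log (t - E) := by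
      apply intervalIntegral.integral_congr
      intro t ht; simp [hφdef, mul_comm]
    have hdiveq : (∫ t in a..Em, g t / (t - E)) = ∫ t in a..Em, g t * (t - E)⁻¹ := by
      apply intervalIntegral.integral_congr
      intro t ht; simp only [div_eq_mul_inv]
    have haε : a - E = ε := by simp [hadef]
    rw [haε] at hftc
    rw [hdiveq, hφeq]
    linarith [hftc]
  -- limits
  have hev : ∀ᶠ ε in 𝓝[>] (0:ℝ), ε ∈ Ioo (0:ℝ) (Em - E) :=
    Ioo_mem_nhdsGT_of_mem ⟨le_refl 0, sub_pos.2 hEm⟩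
  have hA : Tendsto (fun ε => ∫ t in (E + ε)..Em, φ t) (𝓝[>] (0:ℝ))
      (𝓝 (∫ t in E..Em, φ t)) := by
    have hφOn : IntegrableOn φ (uIcc E Em) volume := by
      rw [huIcc, integrableOn_Icc_iff_integrableOn_Ioc]
      rw [intervalIntegrable_iff_integrableOn_Ioc_of_le hEm.le] at hφint
      exact hφint
    have hc := intervalIntegral.continuousOn_primitive_interval_left hφOn
    have hcw : ContinuousWithinAt (fun u => ∫ t in u..Em, φ t) (uIcc E Em) E :=
      hc E (by rw [huIcc]; exact ⟨le_rfl, hEm.le⟩)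
    apply hcw.tendsto.comp
    apply tendsto_nhdsWithin_of_tendsto_nhds_of_eventually_within
    · have : Tendsto (fun ε : ℝ => E + ε) (𝓝 0) (𝓝 (E + 0)) :=
        (continuous_const.add continuous_id).tendsto 0
      rw [add_zero] at this
      exact this.mono_left nhdsWithin_le_nhds
    · filter_upwards [hev] with ε hε
      rw [huIcc]
      constructor <;> [linarith [hε.1]; linarith [hε.2]]
  have hεlog : Tendsto (fun ε : ℝ => ε * Real.log ε) (𝓝[>] (0:ℝ)) (𝓝 0) := by
    have := tendsto_log_mul_rpow_nhdsGT_zero one_pos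
    refine this.congr' ?_
    filter_upwards [self_mem_nhdsWithin] with ε (hε : (0:ℝ) < ε)
    rw [Real.rpow_one, mul_comm]
  have hB : Tendsto (fun ε => (g E - g (E + ε)) * Real.log ε) (𝓝[>] (0:ℝ)) (𝓝 0) := by
    apply squeeze_zero_norm' (a := fun ε => M * |ε * Real.log ε|)
    · filter_upwards [hev] with ε hε
      have hεI : E + ε ∈ Icc E₀ Em := ⟨by linarith [hε.1], by linarith [hε.2]⟩
      have hmvt : ‖g E - g (E + ε)‖ ≤ M * ‖E - (E + ε)‖ :=
        Convex.norm_image_sub_le_of_norm_hasDerivWithin_le hd hM (convex_Icc _ _) hεI hEI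
      have h1 : ‖E - (E + ε)‖ = ε := by
        rw [Real.norm_eq_abs]; rw [show E - (E + ε) = -ε by ring, abs_neg,
          abs_of_pos hε.1]
      rw [h1] at hmvt
      calc ‖(g E - g (E + ε)) * Real.log ε‖
          = ‖g E - g (E + ε)‖ * |Real.log ε| := by
            rw [Real.norm_eq_abs, Real.norm_eq_abs, abs_mul]
        _ ≤ M * ε * |Real.log ε| := by
            apply mul_le_mul_of_nonneg_right hmvt (abs_nonneg _)
        _ = M * |ε * Real.log ε| := by
            rw [abs_mul, abs_of_pos hε.1]; ring
    · have habs : Tendsto (fun ε : ℝ => |ε * Real.log ε|) (𝓝[>] (0:ℝ)) (𝓝 0) := by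
        have := hεlog.abs; simpa using this
      have := habs.const_mul M
      simpa using this
  rw [HasPF1Upper]
  have hgoal : Tendsto (fun ε : ℝ => Real.log (Em - E) * g Em - (∫ t in (E + ε)..Em, φ t)
      + (g E - g (E + ε)) * Real.log ε) (𝓝[>] (0:ℝ))
      (𝓝 ((- ∫ E' in E..Em, Real.log (E' - E) * f' x E' E) + Real.log (Em - E) * f x Em E)) := by
    have h := ((tendsto_const_nhds (x := Real.log (Em - E) * g Em)).sub hA).add hB
    have heq : Real.log (Em - E) * g Em - (∫ t in E..Em, φ t) + 0
        = (- ∫ E' in E..Em, Real.log (E' - E) * f' x E' E) + Real.log (Em - E) * f x Em E := by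
      simp only [hφdef, hgdef, hg'def, add_zero]
      ring
    rwa [heq] at h
  apply hgoal.congr'
  filter_upwards [hev] with ε hε
  exact (key ε hε).symm
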